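/- Let ρ₁', …, ρ_p' (p ≥ 2) be predicates on {0,1} × X for a set X. For all a ∈ X: (∃ y ∈ {0,1}, ⋀_{i=1}^{p} ρᵢ'(y, a)) holds if and only if (⋀_{1 ≤ i < j ≤ p} ∃ z ∈ {0,1}, ρᵢ'(z, a) ∧ ρⱼ'(z, a)) holds. -/
import Mathlib

/-- A single existential quantifier over a Boolean variable shared by p ≥ 2
conjuncts can be replaced by pairwise existentials. -/
theorem stmt_6 {X : Type*} (p : ℕ) (hp : 2 ≤ p)
    (ρ : Fin p → Bool → X → Prop) (a : X) :
    (∃ y : Bool, ∀ i, ρ i y a) ↔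
      (∀ i j : Fin p, i < j → ∃ z : Bool, ρ i z a ∧ ρ j z a) := by
  constructor
  · rintro ⟨y, hy⟩ i j _
    exact ⟨y, hy i, hy j⟩
  · intro h
    by_cases hT : ∀ i, ρ i true a
    · exact ⟨true, hT⟩
    · push_neg at hT
      obtain ⟨i₀, hi₀⟩ := hT
      have key : ∀ j : Fin p, j ≠ i₀ → ρ j false a ∧ ρ i₀ false a := by
        intro j hj
        rcases lt_or_gt_of_ne hj with hlt | hgt
        · obtain ⟨z, hz1, hz2⟩ := h j i₀ hlt
          cases z
          · exact ⟨hz1, hz2⟩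
          · exact absurd hz2 hi₀
        · obtain ⟨z, hz1, hz2⟩ := h i₀ j hgt
          cases z
          · exact ⟨hz2, hz1⟩
          · exact absurd hz1 hi₀
      refine ⟨false, fun j => ?_⟩
      by_cases hj : j = i₀
      · have hk : ∃ k : Fin p, k ≠ i₀ := by
          have h1 : 1 < p := hp
          rcases eq_or_ne i₀ ⟨0, by omega⟩ with h0 | h0
          · exact ⟨⟨1, by omega⟩, by simp [h0, Fin.ext_iff]⟩
          · exact ⟨⟨0, by omega⟩, fun h => h0 h.symm⟩
        obtain ⟨k, hk⟩ := hk
        exact hj ▸ (key k hk).2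
      · exact (key j hj).1
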